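/- If G is a primitive permutation group of degree n with G ≠ Sym([n]), then G has a base of size at most n-2; that is, there exists a subset B ⊆ [n] with |B| ≤ n-2 whose pointwise stabilizer in G is trivial. -/

import Mathlib

/-- A permutation group `G ≤ Sym([n])` is primitive: it is transitive and every
block of its action on `[n]` is trivial. -/
def IsPrimitivePermGroup {n : ℕ} (G : Subgroup (Equiv.Perm (Fin n))) : Prop :=
  MulAction.IsPretransitive G (Fin n) ∧
    ∀ B : Set (Fin n), MulAction.IsBlock G B → MulAction.IsTrivialBlock B

/-- If a primitive permutation group contains a transposition, it is the whole
symmetric group. -/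
theorem primitive_swap_mem {n : ℕ} (G : Subgroup (Equiv.Perm (Fin n)))
    (hprim : IsPrimitivePermGroup G) {x y : Fin n} (hxy : x ≠ y)
    (hmem : Equiv.swap x y ∈ G) : G = ⊤ := by
  classical
  -- The relation `R p q : p = q or swap p q ∈ G`
  set R : Fin n → Fin n → Prop := fun p q => p = q ∨ Equiv.swap p q ∈ G with hR
  have Rsymm : ∀ p q, R p q → R q p := by
    intro p q h
    rcases h with h | h
    · exact Or.inl h.symm
    · exact Or.inr (by rwa [Equiv.swap_comm])
  have Rtrans : ∀ p q r, R p q → R q r → R p r := by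
    intro p q r h1 h2
    rcases h1 with rfl | h1
    · exact h2
    rcases h2 with rfl | h2
    · exact Or.inr h1
    by_cases hpr : p = r
    · exact Or.inl hpr
    by_cases hpq : p = q
    · subst hpq; exact Or.inr h2
    by_cases hqr : q = r
    · subst hqr; exact Or.inr h1
    right
    have key : Equiv.swap p r =
        Equiv.swap q r * Equiv.swap p q * (Equiv.swap q r)⁻¹ := by
      rw [← Equiv.swap_apply_apply]
      congr 1
      · rw [Equiv.swap_apply_of_ne_of_ne hpq hpr]
      · rw [Equiv.swap_apply_left]
    rw [key]
    exact G.mul_mem (G.mul_mem h2 h1) (G.inv_mem h2)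
  have Rconj : ∀ (g : Equiv.Perm (Fin n)), g ∈ G → ∀ p q, R p q → R (g p) (g q) := by
    intro g hg p q h
    rcases h with rfl | h
    · exact Or.inl rfl
    · right
      rw [Equiv.swap_apply_apply]
      exact G.mul_mem (G.mul_mem hg h) (G.inv_mem hg)
  -- the class of x
  set B : Set (Fin n) := {z | R z x} with hB
  have hblock : MulAction.IsBlock G B := by
    rw [MulAction.isBlock_iff_smul_eq_of_nonempty]
    intro g ⟨z, hz1, hz2⟩
    have hz1' : (g : Equiv.Perm (Fin n))⁻¹ z ∈ B := by
      rwa [Set.mem_smul_set_iff_inv_smul_mem] at hz1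
    -- R z (g x)
    have h1 : R z ((g : Equiv.Perm (Fin n)) x) := by
      have := Rconj g g.2 _ _ hz1'
      simpa using this
    have hgx : R ((g : Equiv.Perm (Fin n)) x) x := Rtrans _ _ _ (Rsymm _ _ h1) hz2
    ext w
    constructor
    · intro hw
      have hw' : (g : Equiv.Perm (Fin n))⁻¹ w ∈ B := by
        rwa [Set.mem_smul_set_iff_inv_smul_mem] at hw
      have h2 : R w ((g : Equiv.Perm (Fin n)) x) := by
        have := Rconj g g.2 _ _ hw'
        simpa using this
      exact Rtrans _ _ _ h2 hgx
    · intro hw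
      rw [Set.mem_smul_set_iff_inv_smul_mem]
      have h2 : R w ((g : Equiv.Perm (Fin n)) x) := Rtrans _ _ _ hw (Rsymm _ _ hgx)
      have h3 := Rconj _ (G.inv_mem g.2) _ _ h2
      simp at h3; exact h3
  have htriv := hprim.2 B hblock
  have hxB : x ∈ B := Or.inl rfl
  have hyB : y ∈ B := Or.inr (by rwa [Equiv.swap_comm])
  rcases htriv with hsub | huniv
  · exact absurd (hsub hxB hyB) hxy
  · -- every swap is in G
    rw [eq_top_iff, ← Equiv.Perm.closure_isSwap, Subgroup.closure_le]
    rintro σ ⟨p, q, hpq, rfl⟩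
    have hp : R p x := Set.eq_univ_iff_forall.mp huniv p
    have hq : R q x := Set.eq_univ_iff_forall.mp huniv q
    have : R p q := Rtrans _ _ _ hp (Rsymm _ _ hq)
    rcases this with h | h
    · exact absurd h hpq
    · exact h

theorem stmt_8 (n : ℕ) (G : Subgroup (Equiv.Perm (Fin n)))
    (hprim : IsPrimitivePermGroup G) (hne : G ≠ ⊤) :
    ∃ B : Finset (Fin n), B.card ≤ n - 2 ∧
      ∀ g ∈ G, (∀ b ∈ B, g b = b) → g = 1 := by
  classical
  rcases lt_or_ge n 2 with hn | hn
  · -- degenerate: Fin n is subsingleton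
    have : Subsingleton (Fin n) := by
      interval_cases n
      · exact ⟨fun a => a.elim0⟩
      · infer_instance
    exact ⟨∅, by simp, fun g _ _ => Equiv.ext fun z => Subsingleton.elim _ _⟩
  · have h0 : (0 : ℕ) < n := by omega
    have h1 : (1 : ℕ) < n := by omega
    set a : Fin n := ⟨0, h0⟩
    set b : Fin n := ⟨1, h1⟩
    have hab : a ≠ b := by simp [a, b, Fin.ext_iff]
    have hswap : Equiv.swap a b ∉ G := fun h =>
      hne (primitive_swap_mem G hprim hab h)
    refine ⟨Finset.univ \ {a, b}, ?_, ?_⟩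
    · have hsub : ({a, b} : Finset (Fin n)) ⊆ Finset.univ := Finset.subset_univ _
      rw [Finset.card_sdiff_of_subset hsub, Finset.card_univ, Fintype.card_fin,
        Finset.card_insert_of_notMem (by simpa using hab), Finset.card_singleton]
    · intro g hg hfix
      have hfix' : ∀ z : Fin n, z ≠ a → z ≠ b → g z = z := by
        intro z hza hzb
        exact hfix z (by simp [Finset.mem_sdiff, hza, hzb])
      have hga : g a = a ∨ g a = b := by
        by_contra h
        push_neg at h
        have := hfix' (g a) h.1 h.2
        exact h.1 (g.injective this)
      have hgb : g b = a ∨ g b = b := by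
        by_contra h
        push_neg at h
        have := hfix' (g b) h.1 h.2
        exact h.2 (g.injective this)
      rcases hga with hga | hga
      · have hgb' : g b = b := by
          rcases hgb with hgb | hgb
          · exact absurd (g.injective (hga.trans hgb.symm)) hab
          · exact hgb
        refine Equiv.ext fun z => ?_
        rw [Equiv.Perm.one_apply]
        by_cases hza : z = a
        · subst hza; exact hga
        by_cases hzb : z = b
        · subst hzb; exact hgb'
        · exact hfix' z hza hzb
      · have hgb' : g b = a := by
          rcases hgb with hgb | hgb
          · exact hgb
          · exact absurd (g.injective (hga.trans hgb.symm)) hab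
        exfalso
        apply hswap
        have : g = Equiv.swap a b := by
          refine Equiv.ext fun z => ?_
          by_cases hza : z = a
          · subst hza; rw [Equiv.swap_apply_left]; exact hga
          by_cases hzb : z = b
          · subst hzb; rw [Equiv.swap_apply_right]; exact hgb'
          · rw [Equiv.swap_apply_of_ne_of_ne hza hzb]; exact hfix' z hza hzb
        rwa [← this]
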